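/- arXiv:2312.03919 — 2 statements merged into one kernel-verified Lean document; each statement's English description precedes it below -/
import Mathlib

section
/- For every k ≥ 1, every coloring c : ℚ → Fin k, and all rationals a < b, there exist rationals a', b' with a ≤ a' < b' ≤ b and a color i : Fin k such that the set {q ∈ (a',b') : c q = i} is dense in the interval (a',b'). -/
/-- For every k ≥ 1, every coloring of ℚ with k colors, and all rationals a < b,
there is a subinterval (a',b') of (a,b) and a color i such that the set of
points of color i in (a',b') is dense in (a',b'). -/
theorem dense_color_subinterval (k : ℕ) (hk : 1 ≤ k) (c : ℚ → Fin k)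
    (a b : ℚ) (hab : a < b) :
    ∃ a' b' : ℚ, a ≤ a' ∧ a' < b' ∧ b' ≤ b ∧
      ∃ i : Fin k, ∀ x y : ℚ, a' ≤ x → x < y → y ≤ b' →
        ∃ q : ℚ, x < q ∧ q < y ∧ a' < q ∧ q < b' ∧ c q = i := by
  by_contra h
  push_neg at h
  have key : ∀ n, n ≤ k → ∃ x y : ℚ, a ≤ x ∧ x < y ∧ y ≤ b ∧
      ∀ q : ℚ, x < q → q < y → ∀ i : Fin k, i.1 < n → c q ≠ i := by
    intro n
    induction n with
    | zero => exact fun _ => ⟨a, b, le_refl _, hab, le_refl _,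
        fun q _ _ i hi => absurd hi (Nat.not_lt_zero _)⟩
    | succ n ih =>
      intro hn
      obtain ⟨x, y, hax, hxy, hyb, hq⟩ := ih (Nat.le_of_succ_le hn)
      obtain ⟨x', y', hx', hxy', hy', hq'⟩ := h x y hax hxy hyb ⟨n, hn⟩
      refine ⟨x', y', le_trans hax hx', hxy', le_trans hy' hyb, fun q h1 h2 i hi => ?_⟩
      rcases Nat.lt_succ_iff_lt_or_eq.mp hi with h3 | h3
      · exact hq q (lt_of_le_of_lt hx' h1) (lt_of_lt_of_le h2 hy') i h3
      · have hi' : i = ⟨n, hn⟩ := Fin.ext h3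
        rw [hi']
        exact hq' q h1 h2 (lt_of_le_of_lt hx' h1) (lt_of_lt_of_le h2 hy')
  obtain ⟨x, y, hax, hxy, hyb, hq⟩ := key k le_rfl
  have h1 : x < (x + y) / 2 := by linarith
  have h2 : (x + y) / 2 < y := by linarith
  exact hq _ h1 h2 (c ((x + y) / 2)) (c ((x + y) / 2)).isLt rfl
end

section
/- Define e : ℕ → ℕ by e(1) = 3 and e(n+1) = 2·n·e(n) + 2 for n ≥ 1. Then for every k ≥ 1 and every family of finite sets S₀, …, S_{k-1} ⊆ ℚ each having at least e(k) elements, there exist rationals a_i < b_i with a_i, b_i ∈ S_i for each i < k such that the open intervals (a₀,b₀), …, (a_{k-1},b_{k-1}) are pairwise disjoint. -/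
private lemma ioo_disj_aux {a1 b1 a2 b2 : ℚ} (h : b1 ≤ a2) :
    Disjoint (Set.Ioo a1 b1) (Set.Ioo a2 b2) := by
  rw [Set.disjoint_left]
  rintro x ⟨_, h1⟩ ⟨h2, _⟩
  linarith

/-- If e satisfies e(1) = 3 and e(n+1) = 2n·e(n) + 2 for n ≥ 1, then from any
k finite sets of rationals each of size at least e(k) one can pick endpoints
a_i < b_i in the i-th set so that the open intervals (a_i, b_i) are pairwise
disjoint. -/
theorem disjoint_intervals_from_large_sets (e : ℕ → ℕ)
    (he1 : e 1 = 3) (herec : ∀ n : ℕ, 1 ≤ n → e (n + 1) = 2 * n * e n + 2)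
    (k : ℕ) (hk : 1 ≤ k) (S : Fin k → Finset ℚ)
    (hcard : ∀ i : Fin k, e k ≤ (S i).card) :
    ∃ a b : Fin k → ℚ,
      (∀ i : Fin k, a i ∈ S i ∧ b i ∈ S i ∧ a i < b i) ∧
      ∀ i j : Fin k, i ≠ j → Disjoint (Set.Ioo (a i) (b i)) (Set.Ioo (a j) (b j)) := by
  classical
  have he3 : ∀ n : ℕ, 1 ≤ n → 3 ≤ e n := by
    intro n hn
    induction n, hn using Nat.le_induction with
    | base => omega
    | succ n hn ih => rw [herec n hn]; nlinarith
  induction k, hk using Nat.le_induction with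
  | base =>
    have h2 : 1 < (S 0).card := by have := hcard 0; omega
    obtain ⟨x, hx, y, hy, hxy⟩ := Finset.one_lt_card.mp h2
    have hall : ∀ i : Fin 1, i = 0 := fun i => Subsingleton.elim i 0
    rcases hxy.lt_or_gt with h | h
    · refine ⟨fun _ => x, fun _ => y, fun i => ?_, fun i j hij => ?_⟩
      · rw [hall i]; exact ⟨hx, hy, h⟩
      · exact absurd (Subsingleton.elim i j) hij
    · refine ⟨fun _ => y, fun _ => x, fun i => ?_, fun i j hij => ?_⟩
      · rw [hall i]; exact ⟨hy, hx, h⟩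
      · exact absurd (Subsingleton.elim i j) hij
  | succ n hn ih =>
    have hen : 3 ≤ e n := he3 n hn
    set T := S (Fin.last n) with hT
    set l := T.sort (· ≤ ·) with hl
    have hlenT : l.length = T.card := Finset.length_sort _
    have hlen : 2 * n + 2 ≤ l.length := by
      have h1 := hcard (Fin.last n)
      rw [herec n hn] at h1
      rw [hlenT]
      nlinarith
    have hslt : l.Pairwise (· < ·) := (Finset.sortedLT_sort T).pairwise
    have hidx : ∀ j : Fin (n + 1), 2 * j.val + 1 < l.length := by
      intro j; have := j.isLt; omega
    have hidx0 : ∀ j : Fin (n + 1), 2 * j.val < l.length := fun j => by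
      have := hidx j; omega
    set A : Fin (n + 1) → ℚ := fun j => l.get ⟨2 * j.val, hidx0 j⟩ with hA
    set B : Fin (n + 1) → ℚ := fun j => l.get ⟨2 * j.val + 1, hidx j⟩ with hB
    have hAB : ∀ j, A j < B j := fun j =>
      hslt.rel_get_of_lt (Fin.mk_lt_mk.mpr (by omega))
    have hBA : ∀ j j' : Fin (n + 1), j < j' → B j < A j' := by
      intro j j' h
      have h2 : (j : ℕ) < j' := h
      exact hslt.rel_get_of_lt (Fin.mk_lt_mk.mpr (by omega))
    have hAmem : ∀ j, A j ∈ T := fun j => (Finset.mem_sort _).mp (l.get_mem _)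
    have hBmem : ∀ j, B j ∈ T := fun j => (Finset.mem_sort _).mp (l.get_mem _)
    -- good predicate
    set P : Fin n → Fin (n + 1) → Prop := fun i j =>
      e n ≤ ((S i.castSucc).filter (fun x => x ≤ A j)).card ∨
      e n ≤ ((S i.castSucc).filter (fun x => B j ≤ x)).card with hP
    have key : ∀ (j j' : Fin (n + 1)) (i : Fin n),
        j < j' → ¬ P i j → ¬ P i j' → False := by
      intro j j' i hjj' h1 h2
      simp only [hP] at h1 h2
      push_neg at h1 h2
      obtain ⟨-, h1b⟩ := h1
      obtain ⟨h2a, -⟩ := h2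
      have hsub : S i.castSucc ⊆
          ((S i.castSucc).filter (fun x => x ≤ A j')) ∪
          ((S i.castSucc).filter (fun x => B j ≤ x)) := by
        intro x hx
        rcases le_or_gt x (A j') with h | h
        · exact Finset.mem_union_left _ (Finset.mem_filter.mpr ⟨hx, h⟩)
        · exact Finset.mem_union_right _ (Finset.mem_filter.mpr
            ⟨hx, le_of_lt (lt_trans (hBA j j' hjj') h)⟩)
      have hc := (Finset.card_le_card hsub).trans (Finset.card_union_le _ _)
      have hc2 := hcard i.castSucc
      rw [herec n hn] at hc2
      nlinarith
    -- pigeonhole to find a good j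
    have hgood : ∃ j : Fin (n + 1), ∀ i : Fin n, P i j := by
      by_contra hcon
      push_neg at hcon
      have hsub : (Finset.univ : Finset (Fin (n + 1))) ⊆
          Finset.univ.biUnion (fun i : Fin n =>
            Finset.univ.filter (fun j => ¬ P i j)) := by
        intro j _
        obtain ⟨i, hi⟩ := hcon j
        exact Finset.mem_biUnion.mpr ⟨i, Finset.mem_univ _,
          Finset.mem_filter.mpr ⟨Finset.mem_univ _, hi⟩⟩
      have hle := (Finset.card_le_card hsub).trans
        (Finset.card_biUnion_le)
      have hone : ∀ i : Fin n,
          (Finset.univ.filter (fun j => ¬ P i j)).card ≤ 1 := by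
        intro i
        apply Finset.card_le_one.mpr
        intro j hj j' hj'
        rcases lt_trichotomy j j' with h | h | h
        · exact absurd (key j j' i h (Finset.mem_filter.mp hj).2
            (Finset.mem_filter.mp hj').2) (fun f => f)
        · exact h
        · exact absurd (key j' j i h (Finset.mem_filter.mp hj').2
            (Finset.mem_filter.mp hj).2) (fun f => f)
      have hsum : (Finset.univ.biUnion (fun i : Fin n =>
            Finset.univ.filter (fun j => ¬ P i j))).card ≤ n := by
        calc _ ≤ ∑ i : Fin n, (Finset.univ.filter (fun j => ¬ P i j)).card :=
              Finset.card_biUnion_le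
          _ ≤ ∑ _i : Fin n, 1 := Finset.sum_le_sum (fun i _ => hone i)
          _ = n := by simp
      have : (Finset.univ : Finset (Fin (n + 1))).card = n + 1 := by simp
      have := Finset.card_le_card hsub
      omega
    obtain ⟨j, hj⟩ := hgood
    -- build the smaller family
    set S' : Fin n → Finset ℚ := fun i =>
      if e n ≤ ((S i.castSucc).filter (fun x => x ≤ A j)).card then
        (S i.castSucc).filter (fun x => x ≤ A j)
      else
        (S i.castSucc).filter (fun x => B j ≤ x) with hS'
    have hS'card : ∀ i : Fin n, e n ≤ (S' i).card := by
      intro i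
      simp only [hS']
      split_ifs with h
      · exact h
      · rcases hj i with h1 | h1
        · exact absurd h1 h
        · exact h1
    have hS'sub : ∀ i : Fin n, S' i ⊆ S i.castSucc := by
      intro i
      simp only [hS']
      split_ifs <;> exact Finset.filter_subset _ _
    have hS'side : ∀ i : Fin n, (∀ x ∈ S' i, x ≤ A j) ∨ (∀ x ∈ S' i, B j ≤ x) := by
      intro i
      simp only [hS']
      split_ifs with h
      · exact Or.inl (fun x hx => (Finset.mem_filter.mp hx).2)
      · exact Or.inr (fun x hx => (Finset.mem_filter.mp hx).2)
    obtain ⟨a', b', hab', hdisj'⟩ := ih S' hS'card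
    refine ⟨Fin.snoc a' (A j), Fin.snoc b' (B j), ?_, ?_⟩
    · intro i
      refine Fin.lastCases ?_ ?_ i
      · simp only [Fin.snoc_last]
        exact ⟨hAmem j, hBmem j, hAB j⟩
      · intro i0
        simp only [Fin.snoc_castSucc]
        obtain ⟨h1, h2, h3⟩ := hab' i0
        exact ⟨hS'sub i0 h1, hS'sub i0 h2, h3⟩
    · -- disjointness
      have hside : ∀ i0 : Fin n,
          Disjoint (Set.Ioo (a' i0) (b' i0)) (Set.Ioo (A j) (B j)) := by
        intro i0
        obtain ⟨h1, h2, -⟩ := hab' i0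
        rcases hS'side i0 with h | h
        · exact ioo_disj_aux (h _ h2)
        · exact (ioo_disj_aux (h _ h1)).symm
      intro i i'
      induction i using Fin.lastCases with
      | last =>
        induction i' using Fin.lastCases with
        | last => intro hne; exact absurd rfl hne
        | cast i1 =>
          intro _
          simp only [Fin.snoc_last, Fin.snoc_castSucc]
          exact (hside i1).symm
      | cast i0 =>
        induction i' using Fin.lastCases with
        | last =>
          intro _
          simp only [Fin.snoc_last, Fin.snoc_castSucc]
          exact hside i0
        | cast i1 =>
          intro hne
          simp only [Fin.snoc_castSucc]
          refine hdisj' i0 i1 (fun h => hne ?_)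
          rw [h]
end
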